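/- For any finite tree T on n nodes with maximum degree Δ ≥ 1, the number of fixed points of the minority process on T is at most 2·F_{n-⌈Δ/2⌉}, where F_k is the k-th Fibonacci number. -/

import Mathlib

open SimpleGraph Finset
open scoped Classical

variable {V : Type*}

/-- Number of neighbors of `v` with the same color as `v`. -/
noncomputable def sameCount (G : SimpleGraph V) [Fintype V] (c : V → Bool) (v : V) : ℕ :=
  ((G.neighborFinset v).filter fun u => c u = c v).card

/-- Number of neighbors of `v` with the opposite color. -/
noncomputable def diffCount (G : SimpleGraph V) [Fintype V] (c : V → Bool) (v : V) : ℕ :=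
  ((G.neighborFinset v).filter fun u => c u ≠ c v).card

/-- One round of the minority process. -/
noncomputable def minStep (G : SimpleGraph V) [Fintype V] (c : V → Bool) : V → Bool :=
  fun v => if sameCount G c v ≤ diffCount G c v then c v else !c v

/-- One round of the majority process. -/
noncomputable def majStep (G : SimpleGraph V) [Fintype V] (c : V → Bool) : V → Bool :=
  fun v => if diffCount G c v ≤ sameCount G c v then c v else !c v

/-- Number of edges of `F` incident to `v`. -/
noncomputable def incCount (F : Finset (Sym2 V)) (v : V) : ℕ :=
  (F.filter fun e => v ∈ e).card

/-- The monochromatic edges of a coloring. -/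
noncomputable def monoEdges (G : SimpleGraph V) [Fintype V] (c : V → Bool) : Finset (Sym2 V) :=
  G.edgeFinset.filter fun e => ∀ x ∈ e, ∀ y ∈ e, c x = c y

/-- The multichromatic edges of a coloring. -/
noncomputable def multiEdges (G : SimpleGraph V) [Fintype V] (c : V → Bool) : Finset (Sym2 V) :=
  G.edgeFinset.filter fun e => ∃ x ∈ e, ∃ y ∈ e, c x ≠ c y

lemma incCount_mono {M E : Finset (Sym2 V)} (h : M ⊆ E) (v : V) :
    incCount M v ≤ incCount E v :=
  Finset.card_le_card (Finset.filter_subset_filter _ h)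

lemma incCount_erase (E : Finset (Sym2 V)) (e : Sym2 V) (v : V) (he : e ∈ E) (hv : v ∈ e) :
    incCount (E.erase e) v = incCount E v - 1 := by
  unfold incCount
  rw [Finset.filter_erase, Finset.card_erase_of_mem (by simp [he, hv])]

noncomputable def bCount [Fintype V] (E : Finset (Sym2 V)) (κ : V → ℕ) : ℕ :=
  (E.powerset.filter fun M => ∀ v, incCount M v ≤ κ v).card

noncomputable def weight [Fintype V] (E : Finset (Sym2 V)) (κ : V → ℕ) : ℕ :=
  ∑ v, min (κ v) (incCount E v)

lemma weight_mono [Fintype V] {M E : Finset (Sym2 V)} (h : M ⊆ E) (κ : V → ℕ) :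
    weight M κ ≤ weight E κ :=
  Finset.sum_le_sum fun v _ => min_le_min le_rfl (incCount_mono h v)

lemma exists_deg_one [Fintype V] (H : SimpleGraph V) (hac : H.IsAcyclic)
    {x y : V} (hxy : H.Adj x y) :
    ∃ a b : V, H.Adj a b ∧ ∀ z, H.Adj a z → z = b := by
  classical
  set P : ℕ → Prop := fun n => ∃ (a b : V) (p : H.Walk a b), p.IsPath ∧ p.length = n with hPdef
  have hcard : 1 ≤ Fintype.card V := Fintype.card_pos_iff.mpr ⟨x⟩
  have hP1 : P 1 := by
    refine ⟨x, y, SimpleGraph.Walk.cons hxy SimpleGraph.Walk.nil, ?_, by simp⟩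
    simp [SimpleGraph.Walk.cons_isPath_iff, hxy.ne]
  set L := Nat.findGreatest P (Fintype.card V) with hLdef
  have hL1 : 1 ≤ L := Nat.le_findGreatest hcard hP1
  have hspec : P L := Nat.findGreatest_spec hcard hP1
  obtain ⟨a, b, p, hp, hlen⟩ := hspec
  cases p with
  | nil => simp at hlen; omega
  | @cons _ c _ h q =>
    refine ⟨a, c, h, ?_⟩
    intro z hz
    by_contra hzc
    by_cases hzs : z ∈ (SimpleGraph.Walk.cons h q).support
    · -- build a cycle
      set t := (SimpleGraph.Walk.cons h q).takeUntil z hzs with htdef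
      have ht : t.IsPath := hp.takeUntil hzs
      have he : s(z, a) ∉ t.edges := by
        intro hmem
        have h2 : s(z, a) ∈ (SimpleGraph.Walk.cons h q).edges :=
          SimpleGraph.Walk.edges_takeUntil_subset _ hzs hmem
        rw [SimpleGraph.Walk.edges_cons] at h2
        rcases List.mem_cons.mp h2 with h3 | h3
        · rw [Sym2.eq_iff] at h3
          rcases h3 with ⟨h4, -⟩ | ⟨h4, -⟩
          · exact hz.ne' h4
          · exact hzc h4
        · have : a ∈ q.support := SimpleGraph.Walk.snd_mem_support_of_mem_edges q h3
          exact ((SimpleGraph.Walk.cons_isPath_iff h q).mp hp).2 this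
      exact hac (SimpleGraph.Walk.cons hz.symm t)
        (SimpleGraph.Path.cons_isCycle ⟨t, ht⟩ hz.symm he)
    · -- extend the path
      have hnew : (SimpleGraph.Walk.cons hz.symm (SimpleGraph.Walk.cons h q)).IsPath := by
        rw [SimpleGraph.Walk.cons_isPath_iff]
        exact ⟨hp, hzs⟩
      have hPL1 : P (L + 1) := by
        refine ⟨z, b, SimpleGraph.Walk.cons hz.symm (SimpleGraph.Walk.cons h q), hnew, ?_⟩
        simp only [SimpleGraph.Walk.length_cons] at hlen ⊢
        omega
      have hbound : L + 1 ≤ Fintype.card V := by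
        have h2 := hnew.length_lt
        simp only [SimpleGraph.Walk.length_cons] at h2 hlen ⊢
        omega
      exact Nat.findGreatest_is_greatest (by omega) hbound hPL1

lemma exists_leaf_edge [Fintype V] (E : Finset (Sym2 V)) (hE : E.Nonempty)
    (hd : ∀ e ∈ E, ¬ e.IsDiag) (hac : (SimpleGraph.fromEdgeSet (↑E : Set (Sym2 V))).IsAcyclic) :
    ∃ v w : V, v ≠ w ∧ E.filter (fun e => v ∈ e) = {s(v, w)} := by
  classical
  obtain ⟨e₀, he₀⟩ := hE
  induction e₀ using Sym2.ind with
  | _ x y =>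
  have hxy : x ≠ y := fun h => hd _ he₀ (by rw [h]; exact Sym2.mk_isDiag_iff.mpr rfl)
  have hadj : (SimpleGraph.fromEdgeSet (↑E : Set (Sym2 V))).Adj x y :=
    (SimpleGraph.fromEdgeSet_adj _).mpr ⟨Finset.mem_coe.mpr he₀, hxy⟩
  obtain ⟨a, b, hab, huniq⟩ := exists_deg_one _ hac hadj
  obtain ⟨habE, habne⟩ := (SimpleGraph.fromEdgeSet_adj _).mp hab
  refine ⟨a, b, habne, ?_⟩
  ext f
  simp only [Finset.mem_filter, Finset.mem_singleton]
  constructor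
  · rintro ⟨hfE, haf⟩
    obtain ⟨u, rfl⟩ := Sym2.mem_iff_exists.mp haf
    have hau : a ≠ u := fun h => hd _ hfE (by rw [← h]; exact Sym2.mk_isDiag_iff.mpr rfl)
    have hadj2 : (SimpleGraph.fromEdgeSet (↑E : Set (Sym2 V))).Adj a u :=
      (SimpleGraph.fromEdgeSet_adj _).mpr ⟨Finset.mem_coe.mpr hfE, hau⟩
    rw [huniq u hadj2]
  · rintro rfl
    exact ⟨Finset.mem_coe.mp habE, Sym2.mem_mk_left a b⟩

lemma bCount_split [Fintype V] (E : Finset (Sym2 V)) (κ : V → ℕ) {v w : V}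
    (hvw : v ≠ w) (he : s(v, w) ∈ E) :
    bCount E κ ≤ bCount (E.erase s(v,w)) κ +
      bCount (E.erase s(v,w)) (fun x => if x = w then κ w - 1 else κ x) := by
  classical
  set e := s(v, w) with hedef
  set P : Finset (Sym2 V) → Prop := fun M => ∀ x, incCount M x ≤ κ x with hP
  have hsplit : bCount E κ =
      ((E.powerset.filter fun M => ∀ x, incCount M x ≤ κ x).filter fun M => e ∉ M).card
      + ((E.powerset.filter fun M => ∀ x, incCount M x ≤ κ x).filter fun M => e ∈ M).card := by
    rw [bCount, ← Finset.card_filter_add_card_filter_not (p := fun M => e ∉ M)]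
    simp
  rw [hsplit]
  gcongr ?_ + ?_
  · -- subsets avoiding e
    apply Finset.card_le_card_of_injOn id
    · intro M hM
      simp only [Finset.mem_coe, Finset.mem_filter, Finset.mem_powerset] at hM ⊢
      exact ⟨Finset.subset_erase.2 ⟨hM.1.1, hM.2⟩, hM.1.2⟩
    · exact Set.injOn_id _
  · -- subsets containing e : map M ↦ M.erase e
    apply Finset.card_le_card_of_injOn (fun M => M.erase e)
    · intro M hM
      simp only [Finset.mem_coe, Finset.mem_filter, Finset.mem_powerset] at hM ⊢
      obtain ⟨⟨hsub, hcap⟩, hmem⟩ := hM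
      refine ⟨Finset.erase_subset_erase _ hsub, ?_⟩
      intro x
      by_cases hx : x = w
      · have h1 : incCount (M.erase e) x = incCount M x - 1 :=
          incCount_erase M e x hmem (by rw [hedef, hx]; exact Sym2.mem_mk_right v w)
        rw [if_pos hx, h1, hx]
        exact Nat.sub_le_sub_right (hcap w) 1
      · rw [if_neg hx]
        exact le_trans (incCount_mono (Finset.erase_subset _ _) x) (hcap x)
    · intro a ha b hb hab
      rw [← Finset.insert_erase (Finset.mem_filter.mp ha).2, ← Finset.insert_erase (Finset.mem_filter.mp hb).2]
      simp only [Finset.mem_coe, Finset.mem_filter] at ha hb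
      simp only at hab
      rw [hab]

lemma bCount_empty [Fintype V] (κ : V → ℕ) : bCount (∅ : Finset (Sym2 V)) κ = 1 := by
  rw [bCount, Finset.powerset_empty, Finset.filter_singleton, if_pos]
  · exact Finset.card_singleton _
  · intro v; simp [incCount]

lemma bCount_le_fib [Fintype V] :
    ∀ (N : ℕ) (E : Finset (Sym2 V)), E.card ≤ N → (∀ e ∈ E, ¬ e.IsDiag) →
    (SimpleGraph.fromEdgeSet (↑E : Set (Sym2 V))).IsAcyclic →
    ∀ κ : V → ℕ, bCount E κ ≤ Nat.fib (1 + weight E κ) := by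
  intro N
  induction N with
  | zero =>
    intro E hcard hd hac κ
    obtain rfl : E = ∅ := Finset.card_eq_zero.mp (Nat.le_zero.mp hcard)
    rw [bCount_empty]
    exact Nat.fib_pos.mpr (by omega)
  | succ N ih =>
    intro E hcard hd hac κ
    rcases Finset.eq_empty_or_nonempty E with rfl | hne
    · rw [bCount_empty]; exact Nat.fib_pos.mpr (by omega)
    obtain ⟨v, w, hvw, hfil⟩ := exists_leaf_edge E hne hd hac
    have he : s(v, w) ∈ E := by
      have h1 : s(v, w) ∈ E.filter (fun e => v ∈ e) := by
        rw [hfil]; exact Finset.mem_singleton_self _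
      exact (Finset.mem_filter.mp h1).1
    set e := s(v, w) with hedef
    set E' := E.erase e with hE'
    have hsub : E' ⊆ E := Finset.erase_subset _ _
    have hcard' : E'.card ≤ N := by
      rw [hE', Finset.card_erase_of_mem he]
      have h2 := Finset.card_pos.mpr hne
      omega
    have hd' : ∀ f ∈ E', ¬ f.IsDiag := fun f hf => hd f (hsub hf)
    have hac' : (SimpleGraph.fromEdgeSet (↑E' : Set (Sym2 V))).IsAcyclic := by
      intro x c hc
      exact hac (c.mapLe (SimpleGraph.fromEdgeSet_mono (Finset.coe_subset.mpr hsub)))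
        (hc.mapLe _)
    have hincv : incCount E v = 1 := by
      rw [incCount, hfil]; simp
    have hincv' : incCount E' v = 0 := by
      rw [incCount, hE', Finset.filter_erase, hfil]; simp
    have hweM : weight E' κ ≤ weight E κ := weight_mono hsub κ
    have hwmem : w ∈ e := Sym2.mem_mk_right v w
    have hincw : 1 ≤ incCount E w :=
      Finset.card_pos.mpr ⟨e, Finset.mem_filter.mpr ⟨he, hwmem⟩⟩
    have hincw' : incCount E' w = incCount E w - 1 := incCount_erase E e w he hwmem
    by_cases h0 : κ v = 0 ∨ κ w = 0
    · have hb : bCount E κ ≤ bCount E' κ := by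
        apply Finset.card_le_card_of_injOn id _ (Set.injOn_id _)
        intro M hM
        simp only [Finset.mem_coe, Finset.mem_filter, Finset.mem_powerset] at hM ⊢
        obtain ⟨hsubM, hcap⟩ := hM
        have heM : e ∉ M := by
          intro hmem
          rcases h0 with h0 | h0
          · have h1 : 1 ≤ incCount M v :=
              Finset.card_pos.mpr ⟨e, Finset.mem_filter.mpr ⟨hmem, Sym2.mem_mk_left v w⟩⟩
            have h2 := hcap v
            omega
          · have h1 : 1 ≤ incCount M w :=
              Finset.card_pos.mpr ⟨e, Finset.mem_filter.mpr ⟨hmem, hwmem⟩⟩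
            have h2 := hcap w
            omega
        exact ⟨Finset.subset_erase.mpr ⟨hsubM, heM⟩, hcap⟩
      exact le_trans hb (le_trans (ih E' hcard' hd' hac' κ)
        (Nat.fib_mono (by omega)))
    · push_neg at h0
      obtain ⟨hv1, hw1⟩ : 1 ≤ κ v ∧ 1 ≤ κ w :=
        ⟨Nat.pos_of_ne_zero h0.1, Nat.pos_of_ne_zero h0.2⟩
      set κ' : V → ℕ := fun x => if x = w then κ w - 1 else κ x with hκ'
      -- weight decompositions
      have hvmem : v ∈ (Finset.univ : Finset V) := Finset.mem_univ v
      have hwmem2 : w ∈ (Finset.univ : Finset V).erase v :=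
        Finset.mem_erase.mpr ⟨(Ne.symm hvw), Finset.mem_univ w⟩
      have d1 : ∀ (F : Finset (Sym2 V)) (κ₀ : V → ℕ), weight F κ₀ =
          min (κ₀ v) (incCount F v) + (min (κ₀ w) (incCount F w) +
            ∑ x ∈ ((Finset.univ : Finset V).erase v).erase w, min (κ₀ x) (incCount F x)) := by
        intro F κ₀
        rw [weight, ← Finset.add_sum_erase _ _ hvmem, ← Finset.add_sum_erase _ _ hwmem2]
      have hrest : ∑ x ∈ ((Finset.univ : Finset V).erase v).erase w, min (κ' x) (incCount E' x)
          ≤ ∑ x ∈ ((Finset.univ : Finset V).erase v).erase w, min (κ x) (incCount E x) := by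
        apply Finset.sum_le_sum
        intro x hx
        have hxw : x ≠ w := (Finset.mem_erase.mp hx).1
        rw [hκ']
        simp only [if_neg hxw]
        exact min_le_min le_rfl (incCount_mono hsub x)
      have hκ'v : κ' v = κ v := by rw [hκ']; simp only [if_neg hvw]
      have hκ'w : κ' w = κ w - 1 := by rw [hκ']; simp
      have w2 : 2 + weight E' κ' ≤ weight E κ := by
        rw [d1 E κ, d1 E' κ', hκ'v, hκ'w, hincv, hincv', hincw']
        have := hrest
        omega
      have w1 : 1 + weight E' κ ≤ weight E κ := by
        rw [d1 E κ, d1 E' κ, hincv, hincv', hincw']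
        have hrest2 : ∑ x ∈ ((Finset.univ : Finset V).erase v).erase w, min (κ x) (incCount E' x)
            ≤ ∑ x ∈ ((Finset.univ : Finset V).erase v).erase w, min (κ x) (incCount E x) :=
          Finset.sum_le_sum fun x _ => min_le_min le_rfl (incCount_mono hsub x)
        omega
      have hsplit := bCount_split E κ hvw he
      have b1 := ih E' hcard' hd' hac' κ
      have b2 := ih E' hcard' hd' hac' κ'
      set W := weight E κ with hW
      obtain ⟨s, hs⟩ : ∃ s, W = s + 2 := ⟨W - 2, by omega⟩
      calc bCount E κ ≤ bCount E' κ + bCount E' κ' := hsplit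
        _ ≤ Nat.fib (1 + weight E' κ) + Nat.fib (1 + weight E' κ') := add_le_add b1 b2
        _ ≤ Nat.fib (s + 2) + Nat.fib (s + 1) :=
            add_le_add (Nat.fib_mono (by omega)) (Nat.fib_mono (by omega))
        _ = Nat.fib (s + 3) := by
            have h : Nat.fib (s + 3) = Nat.fib (s + 1) + Nat.fib (s + 2) :=
              Nat.fib_add_two (n := s + 1)
            omega
        _ = Nat.fib (1 + W) := by rw [hs, show 1 + (s + 2) = s + 3 by ring]


section phase1

variable [Fintype V] {G : SimpleGraph V} {c c' : V → Bool}

lemma fixed_same_le_diff (h : minStep G c = c) (v : V) :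
    sameCount G c v ≤ diffCount G c v := by
  by_contra hlt
  have h1 := congrFun h v
  rw [minStep, if_neg hlt] at h1
  simp at h1

lemma mono_mem_iff {u x : V} (h : G.Adj u x) :
    s(u, x) ∈ monoEdges G c ↔ c u = c x := by
  constructor
  · intro hm
    exact (Finset.mem_filter.mp hm).2 u (Sym2.mem_mk_left u x) x (Sym2.mem_mk_right u x)
  · intro hc
    refine Finset.mem_filter.mpr ⟨SimpleGraph.mem_edgeFinset.mpr h, ?_⟩
    intro a ha b hb
    rcases Sym2.mem_iff.mp ha with rfl | rfl <;> rcases Sym2.mem_iff.mp hb with rfl | rfl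
    · rfl
    · exact hc
    · exact hc.symm
    · rfl

lemma sameCount_eq_incCount (G : SimpleGraph V) (c : V → Bool) (v : V) :
    sameCount G c v = incCount (monoEdges G c) v := by
  apply Finset.card_bij (fun u _ => s(v, u))
  · intro u hu
    obtain ⟨hu1, hu2⟩ := Finset.mem_filter.mp hu
    have hadj : G.Adj v u := (SimpleGraph.mem_neighborFinset _ _ _).mp hu1
    exact Finset.mem_filter.mpr ⟨(mono_mem_iff hadj).mpr hu2.symm, Sym2.mem_mk_left v u⟩
  · intro a ha b hb hab
    exact Sym2.congr_right.mp hab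
  · intro e he
    obtain ⟨hemono, hev⟩ := Finset.mem_filter.mp he
    obtain ⟨u, rfl⟩ := Sym2.mem_iff_exists.mp hev
    obtain ⟨heE, hprop⟩ := Finset.mem_filter.mp hemono
    have hadj : G.Adj v u := SimpleGraph.mem_edgeFinset.mp heE
    refine ⟨u, Finset.mem_filter.mpr ⟨(SimpleGraph.mem_neighborFinset _ _ _).mpr hadj, ?_⟩, rfl⟩
    exact hprop u (Sym2.mem_mk_right v u) v (Sym2.mem_mk_left v u)

lemma same_add_diff (G : SimpleGraph V) (c : V → Bool) (v : V) :
    sameCount G c v + diffCount G c v = G.degree v := by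
  classical
  rw [sameCount, diffCount]
  exact Finset.card_filter_add_card_filter_not (fun u => c u = c v)

lemma color_walk_eq (hm : monoEdges G c = monoEdges G c') {u v : V} (p : G.Walk u v) :
    c u = c' u → c v = c' v := by
  induction p with
  | nil => exact id
  | @cons a m b hadj q ih =>
    intro h
    apply ih
    by_cases hcu : c a = c m
    · have h1 : s(a, m) ∈ monoEdges G c' := by
        rw [← hm]; exact (mono_mem_iff hadj).mpr hcu
      have h2 : c' a = c' m := (mono_mem_iff hadj).mp h1
      calc c m = c a := hcu.symm
        _ = c' a := h
        _ = c' m := h2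
    · have h1 : s(a, m) ∉ monoEdges G c := fun hx => hcu ((mono_mem_iff hadj).mp hx)
      have h2 : ¬ c' a = c' m := by
        intro hx
        exact h1 (by rw [hm]; exact (mono_mem_iff hadj).mpr hx)
      have e1 : c m = !(c a) := Bool.eq_not_iff.mpr (fun hh => hcu hh.symm)
      have e2 : c' m = !(c' a) := Bool.eq_not_iff.mpr (fun hh => h2 hh.symm)
      rw [e1, e2, h]

end phase1

theorem stmt11 [Fintype V] (G : SimpleGraph V) (hT : G.IsTree) (Δ : ℕ)
    (hΔ : Δ = Finset.univ.sup (fun v => G.degree v)) (hΔ1 : 1 ≤ Δ) :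
    Nat.card {c : V → Bool // minStep G c = c} ≤
      2 * Nat.fib (Fintype.card V - (Δ + 1) / 2) := by

  classical
  have hconn := hT.isConnected
  have hne : Nonempty V := hconn.nonempty
  obtain ⟨r⟩ := hne
  set κ : V → ℕ := fun v => G.degree v / 2 with hκ
  set bal : Finset (Finset (Sym2 V)) :=
    (G.edgeFinset.powerset.filter fun M => ∀ v, incCount M v ≤ κ v) with hbal
  -- Step 1: fixed points inject into Bool × bal
  have hmembal : ∀ c : V → Bool, minStep G c = c → monoEdges G c ∈ bal := by
    intro c hc
    refine Finset.mem_filter.mpr ⟨Finset.mem_powerset.mpr (Finset.filter_subset _ _), ?_⟩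
    intro v
    have h1 := fixed_same_le_diff hc v
    have h2 := same_add_diff G c v
    have h3 := sameCount_eq_incCount G c v
    show incCount (monoEdges G c) v ≤ G.degree v / 2
    omega
  set F : {c : V → Bool // minStep G c = c} → Bool × {M // M ∈ bal} :=
    fun c => (c.1 r, ⟨monoEdges G c.1, hmembal c.1 c.2⟩) with hF
  have hinj : Function.Injective F := by
    intro c c' hcc
    rw [hF, Prod.mk.injEq, Subtype.mk.injEq] at hcc
    obtain ⟨h1, h2⟩ := hcc
    apply Subtype.ext
    funext v
    obtain ⟨p⟩ := hconn.preconnected r v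
    exact color_walk_eq h2 p h1
  have hcard1 : Nat.card {c : V → Bool // minStep G c = c} ≤ 2 * bal.card := by
    have h1 := Nat.card_le_card_of_injective F hinj
    rw [Nat.card_prod] at h1
    simpa [Nat.card_eq_finsetCard] using h1
  -- Step 2: bal.card = bCount and apply the fib bound
  have hbalcount : bal.card = bCount G.edgeFinset κ := rfl
  have hGE : SimpleGraph.fromEdgeSet (↑G.edgeFinset : Set (Sym2 V)) = G := by
    rw [SimpleGraph.coe_edgeFinset, SimpleGraph.fromEdgeSet_edgeSet]
  have hfib : bCount G.edgeFinset κ ≤ Nat.fib (1 + weight G.edgeFinset κ) :=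
    bCount_le_fib G.edgeFinset.card G.edgeFinset le_rfl
      (fun e he => G.not_isDiag_of_mem_edgeSet (SimpleGraph.mem_edgeFinset.mp he))
      (by rw [hGE]; exact hT.IsAcyclic) κ
  -- Step 3: arithmetic
  obtain ⟨r0, -, hr0⟩ := Finset.exists_mem_eq_sup Finset.univ ⟨r, Finset.mem_univ r⟩
      (fun v => G.degree v)
  have hΔr0 : G.degree r0 = Δ := by rw [hΔ, hr0]
  have hdegpos : ∀ v : V, 1 ≤ G.degree v := by
    intro v
    rcases eq_or_ne v r0 with rfl | hvr
    · omega
    · obtain ⟨p⟩ := hconn.preconnected v r0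
      cases p with
      | nil => exact absurd rfl hvr
      | cons hadj q =>
        exact (SimpleGraph.degree_pos_iff_exists_adj G v).mpr ⟨_, hadj⟩
  have hedges : G.edgeFinset.card + 1 = Fintype.card V := hT.card_edgeFinset
  have hhand : ∑ v, G.degree v = 2 * G.edgeFinset.card :=
    SimpleGraph.sum_degrees_eq_twice_card_edges G
  have hsplitdeg : ∑ v, G.degree v = (∑ v, G.degree v / 2) + ∑ v, (G.degree v + 1) / 2 := by
    rw [← Finset.sum_add_distrib]
    apply Finset.sum_congr rfl
    intro v _
    omega
  have hceil : (Fintype.card V - 1) + (Δ + 1) / 2 ≤ ∑ v, (G.degree v + 1) / 2 := by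
    have hs : (G.degree r0 + 1) / 2 + ∑ x ∈ Finset.univ.erase r0, (G.degree x + 1) / 2
        = ∑ v, (G.degree v + 1) / 2 :=
      Finset.add_sum_erase Finset.univ (fun v => (G.degree v + 1) / 2) (Finset.mem_univ r0)
    have hrest : (Finset.univ.erase r0).card ≤
        ∑ x ∈ Finset.univ.erase r0, (G.degree x + 1) / 2 := by
      rw [Finset.card_eq_sum_ones]
      apply Finset.sum_le_sum
      intro x _
      have := hdegpos x
      omega
    have hcardrest : (Finset.univ.erase r0).card = Fintype.card V - 1 := by
      rw [Finset.card_erase_of_mem (Finset.mem_univ r0), Finset.card_univ]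
    have hr0term : (G.degree r0 + 1) / 2 = (Δ + 1) / 2 := by rw [hΔr0]
    omega
  have hwle : weight G.edgeFinset κ ≤ ∑ v, G.degree v / 2 := by
    rw [weight]
    exact Finset.sum_le_sum fun v _ => min_le_left _ _
  have hΔlt : Δ < Fintype.card V := by
    rw [← hΔr0]; exact G.degree_lt_card_verts r0
  have hexp : 1 + weight G.edgeFinset κ ≤ Fintype.card V - (Δ + 1) / 2 := by omega
  calc Nat.card {c : V → Bool // minStep G c = c} ≤ 2 * bal.card := hcard1
    _ ≤ 2 * Nat.fib (Fintype.card V - (Δ + 1) / 2) := by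
        rw [hbalcount]
        exact Nat.mul_le_mul_left 2 (le_trans hfib (Nat.fib_mono hexp))
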